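/- Let d ∈ R^r with d ≥ 0, and τ, c ≥ 0. Strong Lagrange duality holds: max over w ∈ R^r₊ of d^T w subject to ‖w‖ ≤ τ and 1^T w ≤ c equals min over ρ ≥ 0 of τ‖(d − ρ1)₊‖ + cρ. -/

import Mathlib

open Matrix

private lemma cs_sqrt' {r : ℕ} (a w : Fin r → ℝ) (ha : ∀ i, 0 ≤ a i) (hw : ∀ i, 0 ≤ w i) :
    (∑ i, a i * w i) ≤ Real.sqrt (∑ i, (a i)^2) * Real.sqrt (∑ i, (w i)^2) := by
  have h0 : 0 ≤ ∑ i, a i * w i :=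
    Finset.sum_nonneg fun i _ => mul_nonneg (ha i) (hw i)
  calc (∑ i, a i * w i) = Real.sqrt ((∑ i, a i * w i)^2) := (Real.sqrt_sq h0).symm
    _ ≤ Real.sqrt ((∑ i, (a i)^2) * ∑ i, (w i)^2) :=
        Real.sqrt_le_sqrt (Finset.sum_mul_sq_le_sq_mul_sq _ _ _)
    _ = _ := Real.sqrt_mul (Finset.sum_nonneg fun i _ => sq_nonneg _) _

private lemma weak_dual' {r : ℕ} (d : Fin r → ℝ) (τ c ρ : ℝ) (hρ : 0 ≤ ρ)
    (w : Fin r → ℝ) (hw : ∀ i, 0 ≤ w i) (hwn : Real.sqrt (∑ i, (w i)^2) ≤ τ)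
    (hws : (∑ i, w i) ≤ c) :
    d ⬝ᵥ w ≤ τ * Real.sqrt (∑ i, (max (d i - ρ) 0)^2) + c * ρ := by
  have h1 : d ⬝ᵥ w = (∑ i, (d i - ρ) * w i) + ρ * ∑ i, w i := by
    simp only [dotProduct, Finset.mul_sum, ← Finset.sum_add_distrib]
    exact Finset.sum_congr rfl fun i _ => by ring
  have h2 : (∑ i, (d i - ρ) * w i) ≤ ∑ i, (max (d i - ρ) 0) * w i :=
    Finset.sum_le_sum fun i _ => mul_le_mul_of_nonneg_right (le_max_left _ _) (hw i)
  have h3 := cs_sqrt' (fun i => max (d i - ρ) 0) w (fun i => le_max_right _ _) hw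
  have hN : 0 ≤ Real.sqrt (∑ i, (max (d i - ρ) 0)^2) := Real.sqrt_nonneg _
  calc d ⬝ᵥ w = (∑ i, (d i - ρ) * w i) + ρ * ∑ i, w i := h1
    _ ≤ Real.sqrt (∑ i, (max (d i - ρ) 0)^2) * Real.sqrt (∑ i, (w i)^2) + ρ * c := by
        gcongr
        exact h2.trans h3
    _ ≤ τ * Real.sqrt (∑ i, (max (d i - ρ) 0)^2) + c * ρ := by
        have hτ' : 0 ≤ τ := le_trans (Real.sqrt_nonneg _) hwn
        nlinarith [mul_le_mul_of_nonneg_left hwn hN]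

set_option maxHeartbeats 2000000 in
theorem stmt_16 (r : ℕ) (d : Fin r → ℝ) (hd : ∀ i, 0 ≤ d i) (τ c : ℝ)
    (hτ : 0 ≤ τ) (hc : 0 ≤ c) :
    ∃ m : ℝ,
      IsGreatest {x : ℝ | ∃ w : Fin r → ℝ, (∀ i, 0 ≤ w i) ∧
          Real.sqrt (∑ i, (w i) ^ 2) ≤ τ ∧ (∑ i, w i) ≤ c ∧ x = d ⬝ᵥ w} m ∧
      IsLeast {x : ℝ | ∃ ρ : ℝ, 0 ≤ ρ ∧
          x = τ * Real.sqrt (∑ i, (max (d i - ρ) 0) ^ 2) + c * ρ} m := by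
  suffices h : ∃ (w : Fin r → ℝ) (ρ : ℝ), (∀ i, 0 ≤ w i) ∧
      Real.sqrt (∑ i, (w i)^2) ≤ τ ∧ (∑ i, w i) ≤ c ∧ 0 ≤ ρ ∧
      d ⬝ᵥ w = τ * Real.sqrt (∑ i, (max (d i - ρ) 0)^2) + c * ρ by
    obtain ⟨w, ρ, hw, hwn, hws, hρ, heq⟩ := h
    refine ⟨d ⬝ᵥ w, ⟨⟨w, hw, hwn, hws, rfl⟩, ?_⟩, ⟨⟨ρ, hρ, heq⟩, ?_⟩⟩
    · rintro x ⟨w', hw', hwn', hws', rfl⟩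
      rw [heq]
      exact weak_dual' d τ c ρ hρ w' hw' hwn' hws'
    · rintro x ⟨ρ', hρ', rfl⟩
      exact weak_dual' d τ c ρ' hρ' w hw hwn hws
  by_cases hd0 : ∀ i, d i = 0
  · refine ⟨fun _ => 0, 0, fun i => le_refl 0, ?_, ?_, le_refl 0, ?_⟩ <;>
      simp [hd0, dotProduct, hτ, hc]
  push_neg at hd0
  obtain ⟨i₀, hi₀⟩ := hd0
  have hne : (Finset.univ : Finset (Fin r)).Nonempty := ⟨i₀, Finset.mem_univ _⟩
  set M : ℝ := Finset.univ.sup' hne d with hMdef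
  have hM : ∀ i, d i ≤ M := fun i => Finset.le_sup' d (Finset.mem_univ i)
  obtain ⟨iM, -, hiM⟩ := Finset.exists_mem_eq_sup' hne d
  have hM0 : 0 < M := lt_of_lt_of_le (lt_of_le_of_ne (hd i₀) (Ne.symm hi₀)) (hM i₀)
  set ψ : ℝ → ℝ := fun ρ => τ * (∑ i, max (d i - ρ) 0)
      - c * Real.sqrt (∑ i, (max (d i - ρ) 0)^2) with hψdef
  have hcont : Continuous ψ := by
    apply Continuous.sub
    · exact continuous_const.mul (continuous_finset_sum _ fun i _ =>
        ((continuous_const.sub continuous_id).max continuous_const))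
    · exact continuous_const.mul ((continuous_finset_sum _ fun i _ =>
        (((continuous_const.sub continuous_id).max continuous_const).pow 2)).sqrt)
  set T : Set ℝ := Set.Icc 0 M ∩ ψ ⁻¹' Set.Iic 0 with hTdef
  have hTclosed : IsClosed T := isClosed_Icc.inter (isClosed_Iic.preimage hcont)
  have hMT : M ∈ T := by
    constructor
    · exact ⟨hM0.le, le_refl M⟩
    · have h0 : ∀ i, max (d i - M) 0 = 0 := fun i => max_eq_right (by linarith [hM i])
      simp only [Set.mem_preimage, Set.mem_Iic, hψdef]
      simp [h0]
  have hTbdd : BddBelow T := ⟨0, fun x hx => hx.1.1⟩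
  set ρs : ℝ := sInf T with hρsdef
  have hρsT : ρs ∈ T := hTclosed.csInf_mem ⟨M, hMT⟩ hTbdd
  have hρs0 : 0 ≤ ρs := hρsT.1.1
  have hρsM : ρs ≤ M := hρsT.1.2
  have hψρs : ψ ρs ≤ 0 := hρsT.2
  have hlt : ∀ ρ, 0 ≤ ρ → ρ < ρs → 0 < ψ ρ := by
    intro ρ h0 hρ
    by_contra h
    push_neg at h
    exact absurd (csInf_le hTbdd ⟨⟨h0, hρ.le.trans hρsM⟩, h⟩) (not_le.2 hρ)
  have hkey : ρs = 0 ∨ ψ ρs = 0 := by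
    rcases eq_or_lt_of_le hρs0 with h | hpos
    · exact Or.inl h.symm
    · right
      refine le_antisymm hψρs ?_
      have htend : Filter.Tendsto ψ (nhdsWithin ρs (Set.Iio ρs)) (nhds (ψ ρs)) :=
        (hcont.tendsto _).mono_left nhdsWithin_le_nhds
      have hev : ∀ᶠ ρ in nhdsWithin ρs (Set.Iio ρs), 0 ≤ ψ ρ := by
        have h1 : ∀ᶠ ρ in nhdsWithin ρs (Set.Iio ρs), 0 < ρ :=
          eventually_nhdsWithin_of_eventually_nhds (eventually_gt_nhds hpos)
        filter_upwards [h1, self_mem_nhdsWithin] with ρ hρ1 hρ2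
        exact (hlt ρ hρ1.le hρ2).le
      exact ge_of_tendsto htend hev
  clear_value T ρs
  -- abbreviations at ρs
  set u : Fin r → ℝ := fun i => max (d i - ρs) 0 with hudef
  have hu0 : ∀ i, 0 ≤ u i := fun i => le_max_right _ _
  set S : ℝ := ∑ i, u i with hSdef
  set Nv : ℝ := Real.sqrt (∑ i, (u i)^2) with hNvdef
  have hNv0 : 0 ≤ Nv := Real.sqrt_nonneg _
  have hsq : Nv^2 = ∑ i, (u i)^2 :=
    Real.sq_sqrt (Finset.sum_nonneg fun i _ => sq_nonneg _)
  have hψρs' : τ * S - c * Nv ≤ 0 := hψρs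
  rcases eq_or_lt_of_le hNv0 with hNz | hNpos
  · -- Nv = 0 : ρs = M, use indicator of argmax
    have husq : ∑ i, (u i)^2 = 0 := by rw [← hsq, ← hNz]; ring
    have hu' : ∀ i, u i = 0 := by
      intro i
      have h2 := (Finset.sum_eq_zero_iff_of_nonneg
        (fun j (_ : j ∈ Finset.univ) => sq_nonneg (u j))).1 husq i (Finset.mem_univ i)
      exact pow_eq_zero_iff (two_ne_zero)|>.1 h2
    have hdle : ∀ i, d i ≤ ρs := by
      intro i
      have := hu' i
      by_contra hcon
      push_neg at hcon
      have : 0 < u i := lt_max_iff.2 (Or.inl (by linarith))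
      rw [hu' i] at this
      exact lt_irrefl 0 this
    have hρsM' : ρs = M := le_antisymm hρsM (by rw [hMdef, hiM]; exact hdle iM)
    -- second max
    set M₂ : ℝ := Finset.univ.sup' hne (fun i => if d i = M then 0 else d i) with hM₂def
    have hM₂lt : M₂ < M := by
      rw [hM₂def]
      apply (Finset.sup'_lt_iff hne).2
      intro i _
      split_ifs with h
      · exact hM0
      · exact lt_of_le_of_ne (hM i) h
    have hM₂0 : 0 ≤ M₂ := by
      have := Finset.le_sup' (fun i => if d i = M then 0 else d i) (Finset.mem_univ iM)
      rw [hM₂def]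
      refine le_trans ?_ this
      simp [(hMdef.trans hiM).symm]
    have hM₂ : ∀ i, d i ≠ M → d i ≤ M₂ := by
      intro i hi
      have := Finset.le_sup' (fun i => if d i = M then 0 else d i) (Finset.mem_univ i)
      rw [hM₂def]
      simp only [hi, ↓reduceIte] at this
      exact this
    set ρ₀ : ℝ := (M₂ + M) / 2 with hρ₀def
    have hρ₀1 : M₂ < ρ₀ := by rw [hρ₀def]; linarith
    have hρ₀2 : ρ₀ < M := by rw [hρ₀def]; linarith
    have hρ₀0 : 0 ≤ ρ₀ := by rw [hρ₀def]; linarith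
    have hψρ₀ : 0 < ψ ρ₀ := hlt ρ₀ hρ₀0 (by rw [hρsM']; exact hρ₀2)
    set A : Finset (Fin r) := Finset.univ.filter (fun i => d i = M) with hAdef
    set k : ℕ := A.card with hkdef
    have hiMA : iM ∈ A := by
      rw [hAdef, Finset.mem_filter]
      exact ⟨Finset.mem_univ _, (hMdef.trans hiM).symm⟩
    have hkpos : 0 < k := Finset.card_pos.2 ⟨iM, hiMA⟩
    have hk0 : (0:ℝ) < (k:ℝ) := by exact_mod_cast hkpos
    have hmax₀ : ∀ i, max (d i - ρ₀) 0 = if d i = M then M - ρ₀ else 0 := by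
      intro i
      split_ifs with h
      · rw [h]; exact max_eq_left (by linarith)
      · exact max_eq_right (by linarith [hM₂ i h])
    have hS₀ : (∑ i, max (d i - ρ₀) 0) = k * (M - ρ₀) := by
      rw [Finset.sum_congr rfl (fun i _ => hmax₀ i), Finset.sum_ite, Finset.sum_const,
        Finset.sum_const_zero, add_zero, nsmul_eq_mul, ← hAdef, ← hkdef]
    have hQ₀ : (∑ i, (max (d i - ρ₀) 0)^2) = k * (M - ρ₀)^2 := by
      have hpt2 : ∀ i, (max (d i - ρ₀) 0)^2 = if d i = M then (M - ρ₀)^2 else 0 := by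
        intro i; rw [hmax₀ i]; split_ifs <;> simp
      rw [Finset.sum_congr rfl (fun i _ => hpt2 i), Finset.sum_ite, Finset.sum_const,
        Finset.sum_const_zero, add_zero, nsmul_eq_mul, ← hAdef, ← hkdef]
    have hMρ₀ : 0 < M - ρ₀ := by linarith
    have hsqrtk : Real.sqrt ((k:ℝ) * (M - ρ₀)^2) = Real.sqrt k * (M - ρ₀) := by
      rw [Real.sqrt_mul (le_of_lt hk0), Real.sqrt_sq hMρ₀.le]
    have hskpos : 0 < Real.sqrt k := Real.sqrt_pos.2 hk0
    have hsk : Real.sqrt k * Real.sqrt k = (k:ℝ) := Real.mul_self_sqrt hk0.le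
    clear_value M₂ ρ₀ A k
    have h5 : 0 < τ * ((k:ℝ) * (M - ρ₀)) - c * (Real.sqrt k * (M - ρ₀)) := by
      have h6 := hψρ₀
      rw [hψdef] at h6
      simp only at h6
      rw [hS₀, hQ₀, hsqrtk] at h6
      linarith
    have h7 : (c * Real.sqrt k) * (M - ρ₀) < (τ * (k:ℝ)) * (M - ρ₀) := by nlinarith [h5]
    have h8 : c * Real.sqrt k < τ * (k:ℝ) := lt_of_mul_lt_mul_right h7 hMρ₀.le
    have hck : c < τ * Real.sqrt k := by
      have h9 : c * Real.sqrt k < (τ * Real.sqrt k) * Real.sqrt k := by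
        rw [mul_assoc, hsk]; exact h8
      exact lt_of_mul_lt_mul_right h9 hskpos.le
    set w2 : Fin r → ℝ := fun i => if d i = M then c / (k:ℝ) else 0 with hw2def
    refine ⟨w2, M, ?_, ?_, ?_, hM0.le, ?_⟩
    · intro i
      simp only [hw2def]
      split_ifs
      · exact div_nonneg hc (Nat.cast_nonneg _)
      · exact le_refl 0
    · have hsum : ∑ i, (w2 i)^2 = c^2 / k := by
        have hpt3 : ∀ i, (w2 i)^2 = if d i = M then (c/(k:ℝ))^2 else 0 := by
          intro i; simp only [hw2def]; split_ifs <;> simp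
        rw [Finset.sum_congr rfl (fun i _ => hpt3 i), Finset.sum_ite, Finset.sum_const,
          Finset.sum_const_zero, add_zero, nsmul_eq_mul, ← hAdef, ← hkdef]
        field_simp
      rw [hsum]
      have hle : c^2 / k ≤ τ^2 := by
        rw [div_le_iff₀ hk0]
        nlinarith [hck, hsk, hskpos, hc, hτ]
      calc Real.sqrt (c^2/(k:ℝ)) ≤ Real.sqrt (τ^2) := Real.sqrt_le_sqrt hle
        _ = τ := Real.sqrt_sq hτ
    · have hsum3 : ∑ i, w2 i = c := by
        simp only [hw2def]
        rw [Finset.sum_ite, Finset.sum_const, Finset.sum_const_zero, add_zero,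
          nsmul_eq_mul, ← hAdef, ← hkdef]
        field_simp
      exact le_of_eq hsum3
    · have h0' : ∀ i, max (d i - M) 0 = 0 := fun i => max_eq_right (by linarith [hM i])
      have hdot : d ⬝ᵥ w2 = c * M := by
        simp only [dotProduct, hw2def]
        have hpt4 : ∀ i, d i * (if d i = M then c / (k:ℝ) else 0)
            = if d i = M then M * (c/(k:ℝ)) else 0 := by
          intro i
          split_ifs with h
          · rw [h]
          · ring
        rw [Finset.sum_congr rfl (fun i _ => hpt4 i), Finset.sum_ite, Finset.sum_const,
          Finset.sum_const_zero, add_zero, nsmul_eq_mul, ← hAdef, ← hkdef]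
        field_simp
      rw [hdot]
      simp [h0']
  · -- Nv > 0 : water-filling solution
    set w : Fin r → ℝ := fun i => τ * u i / Nv with hwdef
    have hw0 : ∀ i, 0 ≤ w i := fun i => div_nonneg (mul_nonneg hτ (hu0 i)) hNv0
    have hwsum : ∑ i, w i = τ * S / Nv := by
      rw [hSdef, Finset.mul_sum, Finset.sum_div]
    have hwsumle : ∑ i, w i ≤ c := by
      rw [hwsum, div_le_iff₀ hNpos]
      linarith
    have hwsq : ∑ i, (w i)^2 = τ^2 := by
      have : ∑ i, (w i)^2 = τ^2 / Nv^2 * ∑ i, (u i)^2 := by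
        rw [Finset.mul_sum]
        exact Finset.sum_congr rfl fun i _ => by rw [hwdef]; ring
      rw [this, ← hsq]
      field_simp
    have hwn : Real.sqrt (∑ i, (w i)^2) ≤ τ := by
      rw [hwsq, Real.sqrt_sq hτ]
    have hpt : ∀ i, d i * u i = (u i)^2 + ρs * u i := by
      intro i
      rcases le_total (d i) ρs with h | h
      · have h0 : u i = 0 := max_eq_right (by linarith)
        rw [h0]; ring
      · have h0 : u i = d i - ρs := max_eq_left (by linarith)
        rw [h0]; ring
    have h4 : ∑ i, d i * u i = Nv^2 + ρs * S := by
      rw [hsq, hSdef, Finset.mul_sum, ← Finset.sum_add_distrib]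
      exact Finset.sum_congr rfl fun i _ => hpt i
    have hdot : d ⬝ᵥ w = τ * (Nv^2 + ρs * S) / Nv := by
      rw [← h4]
      simp only [dotProduct, hwdef]
      rw [Finset.mul_sum, Finset.sum_div]
      exact Finset.sum_congr rfl fun i _ => by ring
    have hρS : ρs * (τ * S) = ρs * (c * Nv) := by
      rcases hkey with h | h
      · rw [h]; ring
      · have : τ * S = c * Nv := by
          have := h
          rw [hψdef] at this
          simp only at this
          linarith [this]
        rw [this]
    refine ⟨w, ρs, hw0, hwn, hwsumle, hρs0, ?_⟩
    rw [hdot, ← hNvdef]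
    field_simp
    nlinarith [hρS]
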